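/- The quantity D'₁(n,γ) := [15n⁴ − 135n³ + 10n²(43+3γ−4γ²) − 180n(3+γ−γ²) + 8(24+35γ−30γ²−5γ³+6γ⁴)] / [480n(n−1)(n−4)(n−4−2γ)(n−4+2γ)(1−γ²)] is strictly positive for all integers n > 4+2γ and γ ∈ (0,1). -/
import Mathlib


/-- Positivity of `D'₁(n,γ)` for `n > 4 + 2γ`, `γ ∈ (0,1)`. -/
theorem stmt_10 (n : ℕ) (γ : ℝ) (hγ : γ ∈ Set.Ioo (0:ℝ) 1) (hn : 4 + 2*γ < (n:ℝ)) :
    0 < (15*(n:ℝ)^4 - 135*(n:ℝ)^3 + 10*(n:ℝ)^2*(43 + 3*γ - 4*γ^2)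
          - 180*(n:ℝ)*(3 + γ - γ^2) + 8*(24 + 35*γ - 30*γ^2 - 5*γ^3 + 6*γ^4)) /
        (480*(n:ℝ)*((n:ℝ) - 1)*((n:ℝ) - 4)*((n:ℝ) - 4 - 2*γ)*((n:ℝ) - 4 + 2*γ)*(1 - γ^2)) := by
  obtain ⟨hγ0, hγ1⟩ := hγ
  have hn5 : (5:ℝ) ≤ (n:ℝ) := by
    have : 4 < (n:ℝ) := by linarith
    have h4 : 4 < n := by exact_mod_cast this
    exact_mod_cast h4
  apply div_pos
  · have hA : 42 ≤ 43 + 3*γ - 4*γ^2 := by nlinarith [mul_nonneg hγ0.le (sub_nonneg.2 hγ1.le)]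
    have hB : 3 + γ - γ^2 ≤ 13/4 := by nlinarith [sq_nonneg (γ - 1/2)]
    have hC : 24 ≤ 24 + 35*γ - 30*γ^2 - 5*γ^3 + 6*γ^4 := by
      nlinarith [mul_nonneg hγ0.le (sub_nonneg.2 hγ1.le), sq_nonneg γ, sq_nonneg (γ^2),
        mul_nonneg (mul_nonneg hγ0.le hγ0.le) (sub_nonneg.2 hγ1.le)]
    have hsq : (0:ℝ) ≤ (n:ℝ)^2 := sq_nonneg _
    have hx : (0:ℝ) ≤ (n:ℝ) - 5 := by linarith
    nlinarith [mul_nonneg (mul_nonneg hx hx) (mul_nonneg hx hx),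
      mul_nonneg (mul_nonneg hx hx) hx, mul_nonneg hx hx,
      mul_le_mul_of_nonneg_left hA (by positivity : (0:ℝ) ≤ 10*(n:ℝ)^2),
      mul_le_mul_of_nonneg_left hB (by linarith : (0:ℝ) ≤ 180*(n:ℝ))]
  · have h1 : (0:ℝ) < (n:ℝ) := by linarith
    have h2 : (0:ℝ) < (n:ℝ) - 1 := by linarith
    have h3 : (0:ℝ) < (n:ℝ) - 4 := by linarith
    have h4 : (0:ℝ) < (n:ℝ) - 4 - 2*γ := by linarith
    have h5 : (0:ℝ) < (n:ℝ) - 4 + 2*γ := by linarith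
    have h6 : (0:ℝ) < 1 - γ^2 := by nlinarith
    positivity
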